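/- For every x ∈ ℝ³, the sum over j = 1,2,3 of (D_j A)(x) applied to the j-th column of A(x)^T equals −2(α²|x|² + 1)x, where D_j denotes the partial derivative with respect to the j-th coordinate of x. -/

import Mathlib

noncomputable section

abbrev V3 := Fin 3 → ℝ

/-- Euclidean dot product on `ℝ³`. -/
def dot3 (x y : V3) : ℝ := ∑ i, x i * y i

/-- Euclidean norm on `ℝ³`. -/
def nrm3 (x : V3) : ℝ := Real.sqrt (dot3 x x)

/-- The antisymmetric matrix of the cross product: `Lmat x * y = x ∧ y`. -/
def Lmat (x : V3) : Matrix (Fin 3) (Fin 3) ℝ :=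
  !![0, -x 2, x 1; x 2, 0, -x 0; -x 1, x 0, 0]

/-- The operator `A(x) = α |x|² I - α x xᵀ - L(x)`. -/
def Amat (α : ℝ) (x : V3) : Matrix (Fin 3) (Fin 3) ℝ :=
  (α * dot3 x x) • (1 : Matrix (Fin 3) (Fin 3) ℝ) - α • Matrix.vecMulVec x x - Lmat x


lemma hprod (a b : Fin 3) (x : V3) : HasFDerivAt (fun y : V3 => y a * y b)
    (x a • (ContinuousLinearMap.proj b : V3 →L[ℝ] ℝ) + x b • ContinuousLinearMap.proj a) x :=
  ((ContinuousLinearMap.proj a : V3 →L[ℝ] ℝ).hasFDerivAt (x := x)).mul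
    ((ContinuousLinearMap.proj b : V3 →L[ℝ] ℝ).hasFDerivAt (x := x))

lemma dEntry (f : V3 → ℝ) (c d l0 l1 l2 : ℝ) (a b : Fin 3) (x v : V3)
    (hf : f = fun y : V3 => c * (y 0 * y 0 + y 1 * y 1 + y 2 * y 2) - d * (y a * y b)
      - (l0 * y 0 + l1 * y 1 + l2 * y 2)) :
    fderiv ℝ f x v = c * (2 * (x 0 * v 0 + x 1 * v 1 + x 2 * v 2))
      - d * (v a * x b + x a * v b) - (l0 * v 0 + l1 * v 1 + l2 * v 2) := by
  have hsum : HasFDerivAt (fun y : V3 => y 0 * y 0 + y 1 * y 1 + y 2 * y 2)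
      ((x 0 • (ContinuousLinearMap.proj 0 : V3 →L[ℝ] ℝ) + x 0 • ContinuousLinearMap.proj 0) +
       (x 1 • (ContinuousLinearMap.proj 1 : V3 →L[ℝ] ℝ) + x 1 • ContinuousLinearMap.proj 1) +
       (x 2 • (ContinuousLinearMap.proj 2 : V3 →L[ℝ] ℝ) + x 2 • ContinuousLinearMap.proj 2)) x :=
    ((hprod 0 0 x).add (hprod 1 1 x)).add (hprod 2 2 x)
  have hlin : HasFDerivAt (fun y : V3 => l0 * y 0 + l1 * y 1 + l2 * y 2)
      (l0 • (ContinuousLinearMap.proj 0 : V3 →L[ℝ] ℝ) + l1 • ContinuousLinearMap.proj 1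
        + l2 • ContinuousLinearMap.proj 2) x :=
    ((((ContinuousLinearMap.proj 0 : V3 →L[ℝ] ℝ).hasFDerivAt (x := x)).const_mul l0).add
      (((ContinuousLinearMap.proj 1 : V3 →L[ℝ] ℝ).hasFDerivAt (x := x)).const_mul l1)).add
      (((ContinuousLinearMap.proj 2 : V3 →L[ℝ] ℝ).hasFDerivAt (x := x)).const_mul l2)
  have htot := ((hsum.const_mul c).sub ((hprod a b x).const_mul d)).sub hlin
  rw [hf, show fderiv ℝ (fun y : V3 => c * (y 0 * y 0 + y 1 * y 1 + y 2 * y 2) - d * (y a * y b)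
      - (l0 * y 0 + l1 * y 1 + l2 * y 2)) x = _ from htot.fderiv]
  simp [ContinuousLinearMap.proj_apply]
  ring

lemma d00 (α : ℝ) (x v : V3) :
    fderiv ℝ (fun y : V3 => Amat α y 0 0) x v =
      α * (2 * (x 0 * v 0 + x 1 * v 1 + x 2 * v 2)) - α * (v 0 * x 0 + x 0 * v 0)
        - (0 * v 0 + 0 * v 1 + 0 * v 2) :=
  dEntry _ α α 0 0 0 0 0 x v (by
    funext y
    simp [Amat, dot3, Lmat, Matrix.vecMulVec, Matrix.sub_apply, Matrix.smul_apply,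
      Matrix.one_apply, Fin.sum_univ_three, smul_eq_mul]
    try ring)

lemma d01 (α : ℝ) (x v : V3) :
    fderiv ℝ (fun y : V3 => Amat α y 0 1) x v =
      0 * (2 * (x 0 * v 0 + x 1 * v 1 + x 2 * v 2)) - α * (v 0 * x 1 + x 0 * v 1)
        - (0 * v 0 + 0 * v 1 + (-1) * v 2) :=
  dEntry _ 0 α 0 0 (-1) 0 1 x v (by
    funext y
    simp [Amat, dot3, Lmat, Matrix.vecMulVec, Matrix.sub_apply, Matrix.smul_apply,
      Matrix.one_apply, Fin.sum_univ_three, smul_eq_mul]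
    try ring)

lemma d02 (α : ℝ) (x v : V3) :
    fderiv ℝ (fun y : V3 => Amat α y 0 2) x v =
      0 * (2 * (x 0 * v 0 + x 1 * v 1 + x 2 * v 2)) - α * (v 0 * x 2 + x 0 * v 2)
        - (0 * v 0 + 1 * v 1 + 0 * v 2) :=
  dEntry _ 0 α 0 1 0 0 2 x v (by
    funext y
    simp [Amat, dot3, Lmat, Matrix.vecMulVec, Matrix.sub_apply, Matrix.smul_apply,
      Matrix.one_apply, Fin.sum_univ_three, smul_eq_mul]
    try ring)

lemma d10 (α : ℝ) (x v : V3) :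
    fderiv ℝ (fun y : V3 => Amat α y 1 0) x v =
      0 * (2 * (x 0 * v 0 + x 1 * v 1 + x 2 * v 2)) - α * (v 1 * x 0 + x 1 * v 0)
        - (0 * v 0 + 0 * v 1 + 1 * v 2) :=
  dEntry _ 0 α 0 0 1 1 0 x v (by
    funext y
    simp [Amat, dot3, Lmat, Matrix.vecMulVec, Matrix.sub_apply, Matrix.smul_apply,
      Matrix.one_apply, Fin.sum_univ_three, smul_eq_mul]
    try ring)

lemma d11 (α : ℝ) (x v : V3) :
    fderiv ℝ (fun y : V3 => Amat α y 1 1) x v =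
      α * (2 * (x 0 * v 0 + x 1 * v 1 + x 2 * v 2)) - α * (v 1 * x 1 + x 1 * v 1)
        - (0 * v 0 + 0 * v 1 + 0 * v 2) :=
  dEntry _ α α 0 0 0 1 1 x v (by
    funext y
    simp [Amat, dot3, Lmat, Matrix.vecMulVec, Matrix.sub_apply, Matrix.smul_apply,
      Matrix.one_apply, Fin.sum_univ_three, smul_eq_mul]
    try ring)

lemma d12 (α : ℝ) (x v : V3) :
    fderiv ℝ (fun y : V3 => Amat α y 1 2) x v =
      0 * (2 * (x 0 * v 0 + x 1 * v 1 + x 2 * v 2)) - α * (v 1 * x 2 + x 1 * v 2)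
        - (-1 * v 0 + 0 * v 1 + 0 * v 2) :=
  dEntry _ 0 α (-1) 0 0 1 2 x v (by
    funext y
    simp [Amat, dot3, Lmat, Matrix.vecMulVec, Matrix.sub_apply, Matrix.smul_apply,
      Matrix.one_apply, Fin.sum_univ_three, smul_eq_mul]
    try ring)

lemma d20 (α : ℝ) (x v : V3) :
    fderiv ℝ (fun y : V3 => Amat α y 2 0) x v =
      0 * (2 * (x 0 * v 0 + x 1 * v 1 + x 2 * v 2)) - α * (v 2 * x 0 + x 2 * v 0)
        - (0 * v 0 + (-1) * v 1 + 0 * v 2) :=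
  dEntry _ 0 α 0 (-1) 0 2 0 x v (by
    funext y
    simp [Amat, dot3, Lmat, Matrix.vecMulVec, Matrix.sub_apply, Matrix.smul_apply,
      Matrix.one_apply, Fin.sum_univ_three, smul_eq_mul]
    try ring)

lemma d21 (α : ℝ) (x v : V3) :
    fderiv ℝ (fun y : V3 => Amat α y 2 1) x v =
      0 * (2 * (x 0 * v 0 + x 1 * v 1 + x 2 * v 2)) - α * (v 2 * x 1 + x 2 * v 1)
        - (1 * v 0 + 0 * v 1 + 0 * v 2) :=
  dEntry _ 0 α 1 0 0 2 1 x v (by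
    funext y
    simp [Amat, dot3, Lmat, Matrix.vecMulVec, Matrix.sub_apply, Matrix.smul_apply,
      Matrix.one_apply, Fin.sum_univ_three, smul_eq_mul]
    try ring)

lemma d22 (α : ℝ) (x v : V3) :
    fderiv ℝ (fun y : V3 => Amat α y 2 2) x v =
      α * (2 * (x 0 * v 0 + x 1 * v 1 + x 2 * v 2)) - α * (v 2 * x 2 + x 2 * v 2)
        - (0 * v 0 + 0 * v 1 + 0 * v 2) :=
  dEntry _ α α 0 0 0 2 2 x v (by
    funext y
    simp [Amat, dot3, Lmat, Matrix.vecMulVec, Matrix.sub_apply, Matrix.smul_apply,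
      Matrix.one_apply, Fin.sum_univ_three, smul_eq_mul]
    try ring)

lemma dAll (α : ℝ) (x v : V3) (i k : Fin 3) :
    fderiv ℝ (fun y : V3 => Amat α y i k) x v =
      (if i = k then α * (2 * (x 0 * v 0 + x 1 * v 1 + x 2 * v 2)) else 0)
        - α * (v i * x k + x i * v k) - Lmat v i k := by
  fin_cases i <;> fin_cases k <;>
    simp [Lmat, d00, d01, d02, d10, d11, d12, d20, d21, d22] <;> ring

set_option maxHeartbeats 1000000 in
theorem stmt1 (α : ℝ) (x : V3) :
    ∑ j : Fin 3,
      (Matrix.of fun i k =>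
        fderiv ℝ (fun y : V3 => Amat α y i k) x (Pi.single j 1)).mulVec
        (fun k => (Amat α x).transpose k j)
      = (-2 * (α ^ 2 * dot3 x x + 1)) • x := by
  funext i
  simp only [Fin.sum_univ_three, Pi.add_apply, Matrix.mulVec, Matrix.of_apply,
    dotProduct, Matrix.transpose_apply, Pi.smul_apply, smul_eq_mul, dAll]
  fin_cases i <;>
  · simp [Amat, dot3, Lmat, Matrix.vecMulVec, Matrix.sub_apply, Matrix.smul_apply,
      Matrix.one_apply, Fin.sum_univ_three, smul_eq_mul, Pi.single_apply, Fin.ext_iff,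
      Matrix.vecHead, Matrix.vecTail]
    ring
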